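/- A multiset Λ of 2n complex numbers is H-realizable (i.e., Λ is the complex eigenvalue multiset of some 2n×2n real Hamiltonian matrix) if and only if Λ is invariant under negation (−Λ = Λ as multisets) and invariant under complex conjugation (Λ̄ = Λ as multisets). -/

import Mathlib

open Matrix Polynomial

/-- The standard symplectic matrix `J_n = [[0, I_n], [-I_n, 0]]`. -/
def symplJ (n : ℕ) : Matrix (Fin n ⊕ Fin n) (Fin n ⊕ Fin n) ℝ :=
  Matrix.fromBlocks 0 1 (-1) 0

/-- A `2n × 2n` real matrix `A` is Hamiltonian if `Aᵀ J_n + J_n A = 0`. -/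
def IsHamiltonian {n : ℕ} (A : Matrix (Fin n ⊕ Fin n) (Fin n ⊕ Fin n) ℝ) : Prop :=
  Aᵀ * symplJ n + symplJ n * A = 0

/-- A multiset `Λ` of complex numbers is H-realizable (with parameter `n`) if it is the
multiset of complex roots of the characteristic polynomial of some `2n × 2n` real
Hamiltonian matrix. -/
def HRealizable (n : ℕ) (Λ : Multiset ℂ) : Prop :=
  ∃ A : Matrix (Fin n ⊕ Fin n) (Fin n ⊕ Fin n) ℝ,
    IsHamiltonian A ∧ ((A.map Complex.ofReal).charpoly).roots = Λ


/-- coefficientwise description of composition with `-X`. -/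
lemma coeff_comp_neg_X {R : Type*} [CommRing R] (r : R[X]) (k : ℕ) :
    (r.comp (-X)).coeff k = (-1) ^ k * r.coeff k := by
  induction r using Polynomial.induction_on' with
  | add p q hp hq => simp [add_comp, hp, hq, mul_add]
  | monomial i a =>
      have h2 : ((monomial i) a).comp (-X) = (monomial i) ((-1) ^ i * a) := by
        rw [← C_mul_X_pow_eq_monomial, mul_comp, C_comp, pow_comp, X_comp, neg_pow,
          ← C_mul_X_pow_eq_monomial, mul_comm ((-1 : R) ^ i) a, _root_.map_mul,
          map_pow, map_neg, _root_.map_one]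
        ring
      rw [h2, coeff_monomial, coeff_monomial]
      by_cases h : i = k
      · subst h; simp
      · simp [h]

/-- Roots of the charpoly of `-N` are the negatives of the roots of charpoly of `N`. -/
lemma roots_charpoly_neg {m : Type*} [Fintype m] [DecidableEq m] (N : Matrix m m ℂ) :
    (-N).charpoly.roots = N.charpoly.roots.map (fun z => -z) := by
  set p := N.charpoly with hp
  have hm : p.Monic := Matrix.charpoly_monic N
  have hs : p.Splits := IsAlgClosed.splits p
  have hcard : Multiset.card p.roots = p.natDegree := splits_iff_card_roots.mp hs
  have hdim : p.natDegree = Fintype.card m := Matrix.charpoly_natDegree_eq_dim N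
  set Φ : ℂ[X] →+* ℂ[X] := eval₂RingHom C (-X) with hΦ
  have hΦp1 : Φ p = (-1) ^ (Fintype.card m) * (-N).charpoly := by
    have h1 : Φ p = ((charmatrix N).map ⇑Φ).det := by
      rw [hp, Matrix.charpoly, RingHom.map_det, RingHom.mapMatrix_apply]
    have h2 : (charmatrix N).map ⇑Φ = -charmatrix (-N) := by
      ext i j : 2
      by_cases hij : i = j
      · subst hij
        simp only [Matrix.map_apply, charmatrix_apply_eq, hΦ, coe_eval₂RingHom,
          eval₂_sub, eval₂_X, eval₂_C, Matrix.neg_apply, map_neg]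
        ring
      · simp only [Matrix.map_apply, charmatrix_apply_ne _ _ _ hij, hΦ, coe_eval₂RingHom,
          eval₂_neg, eval₂_C, Matrix.neg_apply, Matrix.neg_apply, neg_neg, map_neg]
    rw [h1, h2, Matrix.det_neg, Matrix.charpoly]
  have hΦp2 : Φ p = (-1) ^ (Fintype.card m) *
      ((p.roots.map (fun z => -z)).map (fun a => X - C a)).prod := by
    conv_lhs => rw [hs.eq_prod_roots_of_monic hm]
    rw [map_multiset_prod, Multiset.map_map]
    have hstep : (p.roots.map (⇑Φ ∘ fun a => X - C a)) =
        ((p.roots.map (fun z => -z)).map (fun a => X - C a)).map Neg.neg := by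
      rw [Multiset.map_map, Multiset.map_map]
      exact Multiset.map_congr rfl fun a _ => by
        simp only [Function.comp_apply, hΦ, coe_eval₂RingHom, eval₂_sub, eval₂_X, eval₂_C,
          map_neg]
        ring
    rw [hstep, Multiset.prod_map_neg, Multiset.card_map, Multiset.card_map, hcard, hdim]
  have hcancel : ((-1 : ℂ[X]) ^ (Fintype.card m)) ≠ 0 := by
    apply pow_ne_zero
    intro h
    exact one_ne_zero (neg_injective (h.trans (neg_zero).symm))
  have hmain : (-N).charpoly =
      ((p.roots.map (fun z => -z)).map (fun a => X - C a)).prod :=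
    mul_left_cancel₀ hcancel (hΦp1.symm.trans hΦp2)
  rw [hmain, roots_multiset_prod_X_sub_C]


/-- Evaluating the characteristic polynomial of a matrix over a commutative ring. -/
lemma eval_charpoly_aux {k : ℕ} {K : Type*} [CommRing K] (M : Matrix (Fin k) (Fin k) K)
    (s : K) : M.charpoly.eval s = (s • (1 : Matrix (Fin k) (Fin k) K) - M).det := by
  have h1 : M.charpoly.eval s = (evalRingHom s) M.charpoly := rfl
  rw [h1, Matrix.charpoly, RingHom.map_det, RingHom.mapMatrix_apply]
  congr 1
  ext i j : 2
  by_cases hij : i = j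
  · subst hij
    simp [Matrix.map_apply, charmatrix_apply_eq, Matrix.sub_apply, Matrix.smul_apply,
      Matrix.one_apply]
  · simp [Matrix.map_apply, charmatrix_apply_ne _ _ _ hij, Matrix.sub_apply,
      Matrix.smul_apply, Matrix.one_apply, hij]

/-- Determinant of a block matrix `[[t•1, -B],[-C, t•1]]` over a field, `t ≠ 0`. -/
lemma det_fromBlocks_smul_one {k : ℕ} {K : Type*} [Field K] (t : K) (ht : t ≠ 0)
    (B C : Matrix (Fin k) (Fin k) K) :
    (Matrix.fromBlocks (t • (1 : Matrix (Fin k) (Fin k) K)) (-B) (-C) (t • 1)).det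
      = ((t ^ 2) • (1 : Matrix (Fin k) (Fin k) K) - B * C).det := by
  letI : Invertible (t • (1 : Matrix (Fin k) (Fin k) K)) :=
    ⟨t⁻¹ • (1 : Matrix (Fin k) (Fin k) K),
      by rw [Matrix.smul_mul, Matrix.mul_smul, smul_smul, inv_mul_cancel₀ ht, one_smul,
        Matrix.mul_one],
      by rw [Matrix.smul_mul, Matrix.mul_smul, smul_smul, mul_inv_cancel₀ ht, one_smul,
        Matrix.mul_one]⟩
  rw [Matrix.det_fromBlocks₂₂]
  have hinv : ⅟(t • (1 : Matrix (Fin k) (Fin k) K)) = t⁻¹ • 1 := rfl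
  rw [hinv]
  have h2 : t • (1 : Matrix (Fin k) (Fin k) K) - -B * (t⁻¹ • 1) * -C
      = t • 1 - t⁻¹ • (B * C) := by
    rw [Matrix.mul_smul, Matrix.mul_one, smul_neg, neg_mul_neg, Matrix.smul_mul]
  rw [h2, Matrix.det_smul, det_one, mul_one]
  have h3 : t ^ Fintype.card (Fin k) * (t • (1 : Matrix (Fin k) (Fin k) K)
      - t⁻¹ • (B * C)).det = (t • (t • (1 : Matrix (Fin k) (Fin k) K)
      - t⁻¹ • (B * C))).det := by
    rw [Matrix.det_smul]
  rw [h3, smul_sub, smul_smul, smul_smul, mul_inv_cancel₀ ht, one_smul, ← pow_two]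

/-- Characteristic polynomial of an antidiagonal block matrix. -/
lemma charpoly_fromBlocks_zero_diag {k : ℕ} (B₀ C₀ : Matrix (Fin k) (Fin k) ℝ) :
    (Matrix.fromBlocks (0 : Matrix (Fin k) (Fin k) ℝ) B₀ C₀ 0).charpoly
      = ((B₀ * C₀).charpoly).comp (X ^ 2) := by
  classical
  set K := FractionRing (Polynomial ℝ)
  set φ : Polynomial ℝ →+* K := (algebraMap (Polynomial ℝ) K : Polynomial ℝ →+* K) with hφdef
  have hinj : Function.Injective ⇑φ := IsFractionRing.injective (Polynomial ℝ) K
  apply hinj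
  set t : K := φ X with htdef
  have ht0 : t ≠ 0 := by
    intro h
    exact Polynomial.X_ne_zero (hinj (h.trans (map_zero φ).symm))
  set ψ : ℝ →+* K := φ.comp (Polynomial.C : ℝ →+* Polynomial ℝ) with hψdef
  have hφev : ∀ r : Polynomial ℝ, φ r = eval₂ ψ t r := by
    intro r
    conv_lhs => rw [← Polynomial.eval₂_C_X (p := r)]
    rw [Polynomial.hom_eval₂]
  -- LHS
  have h0 : charmatrix (0 : Matrix (Fin k) (Fin k) ℝ) = Matrix.scalar (Fin k) X := by
    simp [charmatrix]
  have hmapdiag : (charmatrix (0 : Matrix (Fin k) (Fin k) ℝ)).map ⇑φ = t • 1 := by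
    rw [h0, Matrix.scalar_apply, Matrix.diagonal_map (map_zero φ),
      ← Matrix.smul_one_eq_diagonal]
  have hmapB : (-(B₀.map ⇑(Polynomial.C : ℝ →+* Polynomial ℝ))).map ⇑φ
      = -(B₀.map ⇑ψ) := by
    ext i j
    simp [Matrix.map_apply, Matrix.neg_apply, hψdef]
  have hmapC : (-(C₀.map ⇑(Polynomial.C : ℝ →+* Polynomial ℝ))).map ⇑φ
      = -(C₀.map ⇑ψ) := by
    ext i j
    simp [Matrix.map_apply, Matrix.neg_apply, hψdef]
  have hL : φ ((Matrix.fromBlocks (0 : Matrix (Fin k) (Fin k) ℝ) B₀ C₀ 0).charpoly)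
      = (Matrix.fromBlocks (t • (1 : Matrix (Fin k) (Fin k) K)) (-(B₀.map ⇑ψ))
          (-(C₀.map ⇑ψ)) (t • 1)).det := by
    rw [Matrix.charpoly, RingHom.map_det, RingHom.mapMatrix_apply, charmatrix_fromBlocks,
      Matrix.fromBlocks_map, hmapdiag, hmapB, hmapC]
  -- RHS
  have hR : φ (((B₀ * C₀).charpoly).comp (X ^ 2))
      = ((t ^ 2) • (1 : Matrix (Fin k) (Fin k) K) - (B₀.map ⇑ψ) * (C₀.map ⇑ψ)).det := by
    rw [hφev, Polynomial.eval₂_comp, eval₂_X_pow, Polynomial.eval₂_eq_eval_map,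
      ← Matrix.charpoly_map, eval_charpoly_aux, Matrix.map_mul]
  rw [hL, hR]
  exact det_fromBlocks_smul_one t ht0 _ _


/-- transposition preserves the characteristic polynomial. -/
lemma charpoly_transpose_aux {m : Type*} [Fintype m] [DecidableEq m] {R : Type*} [CommRing R]
    (M : Matrix m m R) : Mᵀ.charpoly = M.charpoly := by
  have h : charmatrix (Mᵀ) = (charmatrix M)ᵀ := by
    rw [charmatrix, charmatrix, RingHom.mapMatrix_apply, RingHom.mapMatrix_apply,
      Matrix.transpose_sub, ← Matrix.transpose_map, Matrix.scalar_apply,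
      Matrix.diagonal_transpose]
  rw [Matrix.charpoly, h, Matrix.det_transpose, Matrix.charpoly]

/-- `charpoly` of the complexification. -/
lemma charpoly_map_ofReal {m : Type*} [Fintype m] [DecidableEq m] (A : Matrix m m ℝ) :
    (A.map Complex.ofReal).charpoly = A.charpoly.map Complex.ofRealHom := by
  have h : (Complex.ofReal : ℝ → ℂ) = ⇑Complex.ofRealHom := rfl
  rw [h, Matrix.charpoly_map]

/-- conjugation by an invertible matrix preserves the characteristic polynomial. -/
lemma charpoly_conj_aux {m : Type*} [Fintype m] [DecidableEq m] {R : Type*} [CommRing R]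
    (P Q M : Matrix m m R) (h : P * Q = 1) : (P * M * Q).charpoly = M.charpoly := by
  have hch : ∀ N : Matrix m m R, charmatrix N
      = (X : R[X]) • (1 : Matrix m m R[X]) - N.map ⇑(C : R →+* R[X]) := by
    intro N
    rw [charmatrix, RingHom.mapMatrix_apply]
    congr 1
    rw [Matrix.scalar_apply, Matrix.smul_one_eq_diagonal]
  have hPQ : (P.map ⇑(C : R →+* R[X])) * (Q.map ⇑(C : R →+* R[X])) = 1 := by
    rw [← Matrix.map_mul, h, Matrix.map_one _ (map_zero C) (map_one C)]
  have hc : (P.map ⇑(C : R →+* R[X])) * charmatrix M * (Q.map ⇑(C : R →+* R[X]))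
      = charmatrix (P * M * Q) := by
    rw [hch, hch, Matrix.mul_sub, Matrix.sub_mul, Matrix.mul_smul, Matrix.mul_one,
      Matrix.smul_mul, hPQ, Matrix.map_mul, Matrix.map_mul]
  rw [Matrix.charpoly, ← hc, det_mul, det_mul,
    mul_comm ((P.map ⇑(C : R →+* R[X])).det) (charmatrix M).det, mul_assoc, ← det_mul, hPQ,
    det_one, mul_one, Matrix.charpoly]

/-- Key construction: every monic real polynomial `q` gives a Hamiltonian matrix with
characteristic polynomial `q (X²)`. -/
lemma exists_hamiltonian_charpoly (q : Polynomial ℝ) (hq : q.Monic) :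
    ∃ A : Matrix (Fin q.natDegree ⊕ Fin q.natDegree) (Fin q.natDegree ⊕ Fin q.natDegree) ℝ,
      IsHamiltonian A ∧ A.charpoly = q.comp (X ^ 2) := by
  classical
  set d := q.natDegree with hd
  have hq0 : q ≠ 0 := hq.ne_zero
  set pb : PowerBasis ℝ (AdjoinRoot q) := AdjoinRoot.powerBasis hq0 with hpb
  set Cq : Matrix (Fin d) (Fin d) ℝ := Algebra.leftMulMatrix pb.basis pb.gen with hCq
  -- entries of the companion matrix
  have hentry : ∀ i j : Fin d, Cq i j =
      (if (i : ℕ) = (j : ℕ) + 1 then 1 else 0)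
        + (if (j : ℕ) + 1 = d then -q.coeff (i : ℕ) else 0) := by
    intro i j
    rw [show Cq i j = pb.basis.repr (pb.gen * pb.basis j) i from
      Algebra.leftMulMatrix_eq_repr_mul _ _ _ _]
    have hb : ∀ m : Fin d, pb.basis m = pb.gen ^ (m : ℕ) := fun m => pb.basis_eq_pow m
    have hmul : pb.gen * pb.basis j = pb.gen ^ ((j : ℕ) + 1) := by
      rw [hb j, pow_succ']
    rw [hmul]
    have hrs : ∀ m k : Fin d, pb.basis.repr (pb.basis m) k = if m = k then 1 else 0 :=
      fun m k => (congrArg (fun f => f k) (pb.basis.repr_self m)).trans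
        (by convert Finsupp.single_apply <;> rfl)
    rcases lt_or_eq_of_le (Nat.succ_le_of_lt j.isLt) with hj | hj
    · -- j + 1 < d
      have hj2 : (j : ℕ) + 1 < d := hj
      have hjj : pb.gen ^ ((j : ℕ) + 1) = pb.basis ⟨(j : ℕ) + 1, hj2⟩ := by
        exact (hb ⟨(j : ℕ) + 1, hj2⟩).symm
      rw [hjj]
      refine (hrs ⟨(j : ℕ) + 1, hj2⟩ i).trans ?_
      have hne : ¬((j : ℕ) + 1 = d) := Nat.ne_of_lt hj2
      rw [if_neg hne, add_zero]
      by_cases hij : (⟨(j : ℕ) + 1, hj2⟩ : Fin d) = i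
      · rw [if_pos hij, if_pos]
        rw [← hij]
      · rw [if_neg hij, if_neg]
        intro hcon
        exact hij (Fin.ext hcon.symm)
    · -- j + 1 = d
      have hj' : (j : ℕ) + 1 = d := hj
      have hgen : pb.gen ^ ((j : ℕ) + 1) = ∑ m : Fin d, (-q.coeff (m : ℕ)) • pb.basis m := by
      -- use aeval (root) q = 0
        have h0 : (aeval pb.gen) q = 0 := by
          have hg : pb.gen = AdjoinRoot.root q := by
            rw [hpb, AdjoinRoot.powerBasis_gen]
          rw [hg, AdjoinRoot.aeval_eq, AdjoinRoot.mk_self]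
        rw [Polynomial.aeval_eq_sum_range, ← hd, Finset.sum_range_succ,
          hq.coeff_natDegree, one_smul] at h0
        have h1 : pb.gen ^ d = -∑ i ∈ Finset.range d, q.coeff i • pb.gen ^ i := by
          rw [eq_neg_iff_add_eq_zero, add_comm]
          exact h0
        rw [hj', h1, ← Fin.sum_univ_eq_sum_range (fun i => q.coeff i • pb.gen ^ i) d,
          ← Finset.sum_neg_distrib]
        exact Finset.sum_congr rfl fun m _ => by rw [hb m, neg_smul]
      rw [hgen, map_sum]
      simp only [LinearEquiv.map_smul]
      refine (Finset.sum_apply' i).trans ((Finset.sum_congr rfl fun m _ =>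
        (Finsupp.smul_apply ..).trans (congrArg _ (hrs m i))).trans ?_)
      simp only [smul_eq_mul, mul_ite, mul_one, mul_zero]
      rw [Finset.sum_ite_eq' Finset.univ i (fun m => -q.coeff (m : ℕ)),
        if_pos (Finset.mem_univ i)]
      have hne : ¬((i : ℕ) = (j : ℕ) + 1) := by
        rw [hj']; exact Nat.ne_of_lt i.isLt
      rw [if_neg hne, if_pos hj', zero_add]
  -- the Hankel symmetrizer
  set H : Matrix (Fin d) (Fin d) ℝ :=
    Matrix.of (fun i j : Fin d => q.coeff ((i : ℕ) + (j : ℕ) + 1)) with hH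
  have hHapp : ∀ i j : Fin d, H i j = q.coeff ((i : ℕ) + (j : ℕ) + 1) := fun i j => rfl
  have hHsymm : Hᵀ = H := by
    ext i j
    rw [Matrix.transpose_apply, hHapp, hHapp, add_comm (j : ℕ) (i : ℕ)]
  have hcoeffd : ∀ j : ℕ, q.coeff (d + j) = if j = 0 then 1 else 0 := by
    intro j
    cases j with
    | zero => rw [if_pos rfl, add_zero, hd, hq.coeff_natDegree]
    | succ m =>
        rw [if_neg (Nat.succ_ne_zero m)]
        exact coeff_eq_zero_of_natDegree_lt (by omega)
  -- entries of Cq * H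
  have hmulCH : ∀ i j : Fin d, (Cq * H) i j =
      (if 1 ≤ (i : ℕ) then q.coeff ((i : ℕ) + (j : ℕ)) else 0)
        - (if (j : ℕ) = 0 then q.coeff (i : ℕ) else 0) := by
    intro i j
    have hdpos : 0 < d := i.pos
    rw [Matrix.mul_apply]
    have hterm : ∀ k : Fin d, Cq i k * H k j =
        (if (i : ℕ) = (k : ℕ) + 1 then q.coeff ((k : ℕ) + (j : ℕ) + 1) else 0)
          + (if (k : ℕ) + 1 = d then -q.coeff (i : ℕ) * q.coeff ((k : ℕ) + (j : ℕ) + 1)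
              else 0) := by
      intro k
      rw [hentry i k, hHapp, add_mul]
      congr 1
      · by_cases h : (i : ℕ) = (k : ℕ) + 1
        · rw [if_pos h, if_pos h, one_mul]
        · rw [if_neg h, if_neg h, zero_mul]
      · by_cases h : (k : ℕ) + 1 = d
        · rw [if_pos h, if_pos h]
        · rw [if_neg h, if_neg h, zero_mul]
    rw [Finset.sum_congr rfl fun k _ => hterm k, Finset.sum_add_distrib]
    have hsum1 : (∑ k : Fin d, if (i : ℕ) = (k : ℕ) + 1
        then q.coeff ((k : ℕ) + (j : ℕ) + 1) else 0)
        = if 1 ≤ (i : ℕ) then q.coeff ((i : ℕ) + (j : ℕ)) else 0 := by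
      rcases Nat.eq_zero_or_pos (i : ℕ) with hi | hi
      · rw [if_neg (by omega)]
        apply Finset.sum_eq_zero
        intro k _
        rw [if_neg (by omega)]
      · rw [if_pos (show 1 ≤ (i : ℕ) by omega)]
        obtain ⟨m, hm⟩ : ∃ m, (i : ℕ) = m + 1 := ⟨(i : ℕ) - 1, by omega⟩
        have hmd : m < d := by have := i.isLt; omega
        rw [Finset.sum_eq_single (⟨m, hmd⟩ : Fin d)]
        · rw [if_pos (show (i : ℕ) = m + 1 from hm)]
          congr 1
          show m + (j : ℕ) + 1 = (i : ℕ) + (j : ℕ)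
          omega
        · intro k _ hk
          rw [if_neg]
          intro hcon
          refine hk (Fin.ext ?_)
          show (k : ℕ) = m
          omega
        · intro hcon
          exact absurd (Finset.mem_univ _) hcon
    have hsum2 : (∑ k : Fin d, if (k : ℕ) + 1 = d
        then -q.coeff (i : ℕ) * q.coeff ((k : ℕ) + (j : ℕ) + 1) else 0)
        = -(if (j : ℕ) = 0 then q.coeff (i : ℕ) else 0) := by
      have hd1 : d - 1 < d := by omega
      rw [Finset.sum_eq_single (⟨d - 1, hd1⟩ : Fin d)]
      · rw [if_pos (show (d - 1) + 1 = d by omega)]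
        have harg : (d - 1) + (j : ℕ) + 1 = d + (j : ℕ) := by omega
        rw [show ((⟨d - 1, hd1⟩ : Fin d) : ℕ) = d - 1 from rfl, harg, hcoeffd]
        by_cases hj : (j : ℕ) = 0
        · rw [if_pos hj, if_pos hj, mul_one]
        · rw [if_neg hj, if_neg hj, mul_zero, neg_zero]
      · intro k _ hk
        rw [if_neg]
        intro hcon
        refine hk (Fin.ext ?_)
        show (k : ℕ) = d - 1
        omega
      · intro hcon
        exact absurd (Finset.mem_univ _) hcon
    rw [hsum1, hsum2, ← sub_eq_add_neg]
  -- B := Cq * H is symmetric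
  have hBsymm : (Cq * H)ᵀ = Cq * H := by
    ext i j
    rw [Matrix.transpose_apply, hmulCH, hmulCH]
    by_cases hi : (i : ℕ) = 0 <;> by_cases hj : (j : ℕ) = 0 <;>
      simp [hi, hj, Nat.one_le_iff_ne_zero, Nat.add_comm]
  -- H is invertible
  have hdetH : H.det ≠ 0 := by
    by_cases hd0 : d = 0
    · haveI : IsEmpty (Fin d) := ⟨fun i => absurd i.isLt (by omega)⟩
      rw [Matrix.det_isEmpty]
      exact one_ne_zero
    have hdpos : 0 < d := Nat.pos_of_ne_zero hd0
    have htri : (H.submatrix id ⇑(Fin.revPerm : Equiv.Perm (Fin d))).BlockTriangular id := by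
      intro i j hij
      have hij' : (j : ℕ) < (i : ℕ) := hij
      rw [Matrix.submatrix_apply, id_eq, hHapp]
      apply coeff_eq_zero_of_natDegree_lt
      have hv : ((Fin.revPerm j : Fin d) : ℕ) = d - ((j : ℕ) + 1) := Fin.val_rev j
      have h1 := i.isLt
      have h2 := j.isLt
      omega
    have h1 : (H.submatrix id ⇑(Fin.revPerm : Equiv.Perm (Fin d))).det = 1 := by
      rw [Matrix.det_of_upperTriangular htri]
      apply Finset.prod_eq_one
      intro i _
      rw [Matrix.submatrix_apply, id_eq, hHapp]
      have hv : ((Fin.revPerm i : Fin d) : ℕ) = d - ((i : ℕ) + 1) := Fin.val_rev i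
      have harg : (i : ℕ) + ((Fin.revPerm i : Fin d) : ℕ) + 1 = q.natDegree := by
        have := i.isLt
        omega
      rw [harg]
      exact hq.coeff_natDegree
    have h2 := Matrix.det_permute' (Fin.revPerm : Equiv.Perm (Fin d)) H
    rw [h1] at h2
    intro h0
    rw [h0, mul_zero] at h2
    exact one_ne_zero h2
  have hHunit : IsUnit H.det := isUnit_iff_ne_zero.mpr hdetH
  have hHinv : H * H⁻¹ = 1 := Matrix.mul_nonsing_inv H hHunit
  have hHinvsymm : (H⁻¹)ᵀ = H⁻¹ := by rw [Matrix.transpose_nonsing_inv, hHsymm]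
  have hBC : (Cq * H) * H⁻¹ = Cq := by rw [mul_assoc, hHinv, mul_one]
  have hCqchar : Cq.charpoly = q := by
    have h := charpoly_leftMulMatrix (AdjoinRoot.powerBasis hq0)
    rw [AdjoinRoot.minpoly_powerBasis_gen_of_monic hq] at h
    exact h
  refine ⟨Matrix.fromBlocks 0 (Cq * H) H⁻¹ 0, ?_, ?_⟩
  · show (Matrix.fromBlocks 0 (Cq * H) H⁻¹ 0)ᵀ * symplJ d
      + symplJ d * Matrix.fromBlocks 0 (Cq * H) H⁻¹ 0 = 0
    rw [symplJ, Matrix.fromBlocks_transpose, hBsymm, hHinvsymm, Matrix.transpose_zero,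
      Matrix.fromBlocks_multiply, Matrix.fromBlocks_multiply, Matrix.fromBlocks_add]
    simp only [Matrix.mul_zero, Matrix.zero_mul, Matrix.mul_one, Matrix.one_mul,
      Matrix.mul_neg, Matrix.neg_mul, add_zero, zero_add, neg_zero]
    rw [neg_add_cancel, add_neg_cancel]
    exact Matrix.fromBlocks_zero
  · rw [charpoly_fromBlocks_zero_diag, hBC, hCqchar]

lemma exists_hamiltonian_charpoly' (m : ℕ) (q : Polynomial ℝ) (hq : q.Monic)
    (hdeg : q.natDegree = m) :
    ∃ A : Matrix (Fin m ⊕ Fin m) (Fin m ⊕ Fin m) ℝ,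
      IsHamiltonian A ∧ A.charpoly = q.comp (X ^ 2) := by
  subst hdeg
  exact exists_hamiltonian_charpoly q hq


/-- A multiset `Λ` of `2n` complex numbers is H-realizable if and only if it is
invariant under negation and under complex conjugation. -/
theorem hRealizable_iff_neg_conj_invariant {n : ℕ} (Λ : Multiset ℂ)
    (hcard : Multiset.card Λ = 2 * n) :
    HRealizable n Λ ↔
      (Λ.map (fun z => -z) = Λ ∧ Λ.map (fun z => starRingEnd ℂ z) = Λ) := by
  constructor
  · -- forward direction
    rintro ⟨A, hA, rfl⟩
    have hJJ : symplJ n * symplJ n = -1 := by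
      rw [symplJ, Matrix.fromBlocks_multiply]
      have h1 : (-1 : Matrix (Fin n ⊕ Fin n) (Fin n ⊕ Fin n) ℝ)
          = Matrix.fromBlocks (-1) (-0) (-0) (-1) := by
        rw [← Matrix.fromBlocks_neg, Matrix.fromBlocks_one]
      rw [h1]
      simp
    have hA' : Aᵀ * symplJ n + symplJ n * A = 0 := hA
    have h1 : Aᵀ * symplJ n = -(symplJ n * A) := eq_neg_of_add_eq_zero_left hA'
    have hAt : Aᵀ = symplJ n * A * symplJ n := by
      have h2 : Aᵀ = -(Aᵀ * symplJ n * symplJ n) := by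
        rw [mul_assoc, hJJ, Matrix.mul_neg, Matrix.mul_one, neg_neg]
      rw [h2, h1, Matrix.neg_mul, neg_neg]
    have hq1 : symplJ n * (-(symplJ n)) = 1 := by
      rw [Matrix.mul_neg, hJJ, neg_neg]
    have hnegchar : A.charpoly = (-A).charpoly := by
      calc A.charpoly = Aᵀ.charpoly := (charpoly_transpose_aux A).symm
        _ = (symplJ n * A * symplJ n).charpoly := by rw [hAt]
        _ = (symplJ n * (-A) * (-(symplJ n))).charpoly := by
            simp only [Matrix.mul_neg, Matrix.neg_mul, neg_neg]
        _ = (-A).charpoly := charpoly_conj_aux _ _ _ hq1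
    have hmapc : (A.map Complex.ofReal).charpoly = A.charpoly.map Complex.ofRealHom :=
      charpoly_map_ofReal A
    constructor
    · -- negation invariance
      have hmm : ((-A).map Complex.ofReal) = -(A.map Complex.ofReal) := by
        ext i j
        simp [Matrix.map_apply, Matrix.neg_apply]
      have h2 : (-(A.map Complex.ofReal)).charpoly = (A.map Complex.ofReal).charpoly := by
        calc (-(A.map Complex.ofReal)).charpoly
            = ((-A).map Complex.ofReal).charpoly := by rw [hmm]
          _ = (-A).charpoly.map Complex.ofRealHom := charpoly_map_ofReal (-A)
          _ = A.charpoly.map Complex.ofRealHom := by rw [← hnegchar]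
          _ = (A.map Complex.ofReal).charpoly := hmapc.symm
      rw [← roots_charpoly_neg (A.map Complex.ofReal), h2]
    · -- conjugation invariance
      have hs : ((A.map Complex.ofReal).charpoly).Splits :=
        IsAlgClosed.splits _
      have hfix : (A.map Complex.ofReal).charpoly.map (starRingEnd ℂ)
          = (A.map Complex.ofReal).charpoly := by
        rw [hmapc, Polynomial.map_map]
        congr 1
        exact RingHom.ext fun r => Complex.conj_ofReal r
      calc (A.map Complex.ofReal).charpoly.roots.map (fun z => starRingEnd ℂ z)
          = ((A.map Complex.ofReal).charpoly.map (starRingEnd ℂ)).roots :=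
            (hs.roots_map _).symm
        _ = (A.map Complex.ofReal).charpoly.roots := by rw [hfix]
  · -- backward direction
    rintro ⟨hneg, hconj⟩
    set P : Polynomial ℂ := (Λ.map (fun a => X - Polynomial.C a)).prod with hP
    have hProots : P.roots = Λ := roots_multiset_prod_X_sub_C Λ
    have hPmonic : P.Monic :=
      monic_multiset_prod_of_monic _ _ (fun a _ => monic_X_sub_C a)
    have hPdeg : P.natDegree = 2 * n := by
      rw [hP, Polynomial.natDegree_multiset_prod]
      · rw [Multiset.map_map]
        have hstep : (Λ.map (Polynomial.natDegree ∘ fun a => X - Polynomial.C a))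
            = Λ.map (fun _ => 1) :=
          Multiset.map_congr rfl fun a _ => natDegree_X_sub_C a
        rw [hstep, Multiset.map_const', Multiset.sum_replicate, smul_eq_mul, mul_one, hcard]
      · intro hmem
        obtain ⟨a, _, ha⟩ := Multiset.mem_map.mp hmem
        exact X_sub_C_ne_zero a ha
    have hPconj : P.map (starRingEnd ℂ) = P := by
      conv_lhs => rw [hP]
      rw [← Polynomial.coe_mapRingHom, map_multiset_prod, Multiset.map_map]
      have hstep : Λ.map (⇑(mapRingHom (starRingEnd ℂ)) ∘ fun a => X - Polynomial.C a)
          = (Λ.map (fun z => starRingEnd ℂ z)).map (fun a => X - Polynomial.C a) := by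
        rw [Multiset.map_map]
        refine Multiset.map_congr rfl fun a _ => ?_
        simp [Polynomial.map_sub]
      rw [hstep, hconj, hP]
    have hPneg : P.comp (-X) = P := by
      conv_lhs => rw [hP]
      rw [Polynomial.multiset_prod_comp, Multiset.map_map]
      have hstep : Λ.map ((fun p : Polynomial ℂ => p.comp (-X)) ∘ fun a => X - Polynomial.C a)
          = ((Λ.map (fun z => -z)).map (fun a => X - Polynomial.C a)).map Neg.neg := by
        rw [Multiset.map_map, Multiset.map_map]
        refine Multiset.map_congr rfl fun a _ => ?_
        simp only [Function.comp_apply, Polynomial.sub_comp, Polynomial.X_comp,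
          Polynomial.C_comp, map_neg]
        ring
      rw [hstep, Multiset.prod_map_neg, Multiset.card_map, Multiset.card_map, hcard,
        hneg, ← hP, Even.neg_one_pow (even_two_mul n), one_mul]
    have hcr : ∀ i : ℕ, (starRingEnd ℂ) (P.coeff i) = P.coeff i := by
      intro i
      conv_lhs => rw [← Polynomial.coeff_map]
      rw [hPconj]
    have hcoeffreal : ∀ i : ℕ, (((P.coeff i).re : ℝ) : ℂ) = P.coeff i := fun i =>
      Complex.conj_eq_iff_re.mp (hcr i)
    set p : Polynomial ℝ := ∑ i ∈ P.support, (monomial i) ((P.coeff i).re) with hpdef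
    have hpmap : p.map Complex.ofRealHom = P := by
      rw [hpdef, ← Polynomial.coe_mapRingHom, map_sum]
      have hstep : ∀ i ∈ P.support,
          (mapRingHom Complex.ofRealHom) ((monomial i) ((P.coeff i).re))
            = (monomial i) (P.coeff i) := by
        intro i _
        rw [Polynomial.coe_mapRingHom, Polynomial.map_monomial]
        exact congrArg (monomial i) (hcoeffreal i)
      rw [Finset.sum_congr rfl hstep, ← Polynomial.as_sum_support P]
    have hinj : Function.Injective ⇑Complex.ofRealHom := Complex.ofReal_injective
    have hpdeg : p.natDegree = 2 * n := by
      rw [← natDegree_map_eq_of_injective hinj p, hpmap, hPdeg]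
    have hpmonic : p.Monic := by
      have hp2 := hPmonic
      rw [← hpmap] at hp2
      exact monic_map_iff.mp hp2
    have hpcomp : p.comp (-X) = p := by
      apply Polynomial.map_injective Complex.ofRealHom hinj
      rw [Polynomial.map_comp, hpmap, Polynomial.map_neg, Polynomial.map_X, hPneg]
    have hodd : ∀ k : ℕ, Odd k → p.coeff k = 0 := by
      intro k hk
      have h1 : (p.comp (-X)).coeff k = p.coeff k := by rw [hpcomp]
      rw [coeff_comp_neg_X, hk.neg_one_pow, neg_one_mul] at h1
      linarith
    set q0 : Polynomial ℝ := ∑ i ∈ Finset.range (n + 1), (monomial i) (p.coeff (2 * i))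
      with hq0def
    have hq0comp : q0.comp (X ^ 2) = p := by
      have hcomp_eq : ∀ r : Polynomial ℝ, r.comp (X ^ 2) = eval₂ Polynomial.C (X ^ 2) r :=
        fun r => rfl
      have hcs : q0.comp (X ^ 2)
          = ∑ i ∈ Finset.range (n + 1), (monomial (2 * i)) (p.coeff (2 * i)) := by
        rw [hq0def, hcomp_eq, Polynomial.eval₂_finset_sum]
        refine Finset.sum_congr rfl fun i _ => ?_
        rw [← hcomp_eq, ← C_mul_X_pow_eq_monomial, mul_comp, C_comp, pow_comp, X_comp,
          ← pow_mul, C_mul_X_pow_eq_monomial]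
      rw [hcs]
      ext k
      rw [Polynomial.finset_sum_coeff]
      simp only [Polynomial.coeff_monomial]
      rcases Nat.even_or_odd k with hke | hko
      · obtain ⟨r, hr⟩ := hke
        have hk2 : k = 2 * r := by omega
        rw [Finset.sum_eq_single r]
        · rw [if_pos (by omega), hk2]
        · intro b _ hb
          rw [if_neg (by omega)]
        · intro hb
          have hrn : n + 1 ≤ r := by
            by_contra hcon
            exact hb (Finset.mem_range.mpr (by omega))
          rw [if_pos (by omega)]
          exact coeff_eq_zero_of_natDegree_lt (by omega)
      · have h0 : ∀ b ∈ Finset.range (n + 1), (if 2 * b = k then p.coeff (2 * b) else 0) = 0 := by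
          intro b _
          obtain ⟨c, hc⟩ := hko
          exact if_neg (by omega)
        rw [Finset.sum_eq_zero h0, hodd k hko]
    have hq0le : q0.natDegree ≤ n := by
      rw [hq0def]
      refine natDegree_sum_le_of_forall_le _ _ fun i hi => ?_
      exact le_trans (natDegree_monomial_le _)
        (Nat.lt_succ_iff.mp (Finset.mem_range.mp hi))
    have hq0n : q0.coeff n = 1 := by
      rw [hq0def, Polynomial.finset_sum_coeff]
      simp only [Polynomial.coeff_monomial]
      rw [Finset.sum_eq_single n]
      · rw [if_pos rfl, ← hpdeg]
        exact hpmonic.coeff_natDegree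
      · intro b _ hb
        exact if_neg hb
      · intro hb
        exact absurd (Finset.mem_range.mpr (by omega)) hb
    have hq0monic : q0.Monic := monic_of_natDegree_le_of_coeff_eq_one n hq0le hq0n
    have hq0deg : q0.natDegree = n :=
      le_antisymm hq0le (le_natDegree_of_ne_zero (by rw [hq0n]; exact one_ne_zero))
    obtain ⟨A, hHam, hchar⟩ := exists_hamiltonian_charpoly' n q0 hq0monic hq0deg
    refine ⟨A, hHam, ?_⟩
    rw [charpoly_map_ofReal A, hchar, hq0comp, hpmap, hProots]
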